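/- In the subspace-constrained sketch-and-project setting with projectors P := I − (Q A B^{−1/2})† Q A B^{−1/2} and Z := P B^{−1/2} Aᵀ Sᵀ (S A B^{−1/2} P B^{−1/2} Aᵀ Sᵀ)† S A B^{−1/2} P, the error decrease in each iteration satisfies ||B^{1/2}(x^{k+1} − x*)||₂² = ||B^{1/2}(x^k − x*)||₂² − ||Z B^{1/2}(x^k − x*)||₂², where x^{k+1} is the minimizer of ||x − x^k||_B subject to SAx = Sb and QAx = Qb, and x* is the minimizer of ||x − x^0||_B over {x : Ax = b}. -/

import Mathlib

open Matrix

/-- `Mp` is the Moore–Penrose pseudoinverse of `M` (the four Penrose conditions,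
which characterize it uniquely). -/
def IsMoorePenrose {k l : Type*} [Fintype k] [Fintype l]
    (M : Matrix k l ℝ) (Mp : Matrix l k ℝ) : Prop :=
  M * Mp * M = M ∧ Mp * M * Mp = Mp ∧ (M * Mp)ᵀ = M * Mp ∧ (Mp * M)ᵀ = Mp * M

/-- The square root of a positive semidefinite matrix (the definition `Matrix.PosSemidef.sqrt`
of the older Mathlib, since removed). -/
noncomputable def Matrix.PosSemidef.sqrt {n 𝕜 : Type*} [Fintype n] [DecidableEq n] [RCLike 𝕜]
    [PartialOrder 𝕜] [StarOrderedRing 𝕜]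
    {A : Matrix n n 𝕜} (hA : A.PosSemidef) : Matrix n n 𝕜 :=
  hA.1.eigenvectorUnitary.1 * diagonal ((↑) ∘ (√·) ∘ hA.1.eigenvalues) *
  (star hA.1.eigenvectorUnitary : Matrix n n 𝕜)

lemma sqrt_herm_real {n : Type*} [Fintype n] [DecidableEq n] {A : Matrix n n ℝ}
    (hA : A.PosSemidef) : hA.sqrtᴴ = hA.sqrt := by
  unfold Matrix.PosSemidef.sqrt
  set U := hA.1.eigenvectorUnitary
  set D : Matrix n n ℝ := diagonal ((RCLike.ofReal : ℝ → ℝ) ∘ (√·) ∘ hA.1.eigenvalues)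
  have hD : Dᴴ = D := by simp [D]
  rw [conjTranspose_mul, conjTranspose_mul, hD, star_eq_conjTranspose,
    conjTranspose_conjTranspose, Matrix.mul_assoc]

lemma sqrt_mul_self_real {n : Type*} [Fintype n] [DecidableEq n] {A : Matrix n n ℝ}
    (hA : A.PosSemidef) : hA.sqrt * hA.sqrt = A := by
  unfold Matrix.PosSemidef.sqrt
  set U := hA.1.eigenvectorUnitary
  set D : Matrix n n ℝ := diagonal ((RCLike.ofReal : ℝ → ℝ) ∘ (√·) ∘ hA.1.eigenvalues) with hDdef
  have hU : (star U : Matrix n n ℝ) * U.1 = 1 := Unitary.coe_star_mul_self U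
  have e : U.1 * D * (star U : Matrix n n ℝ) * (U.1 * D * (star U : Matrix n n ℝ))
      = U.1 * (D * ((star U : Matrix n n ℝ) * U.1) * D) * (star U : Matrix n n ℝ) := by
    simp only [Matrix.mul_assoc]
  rw [e, hU, Matrix.mul_one, hDdef, diagonal_mul_diagonal]
  conv_rhs => rw [hA.1.spectral_theorem, Unitary.conjStarAlgAut_apply]
  congr 3
  funext i
  simp [Real.mul_self_sqrt (hA.eigenvalues_nonneg i)]

lemma mp_unique {k l : Type*} [Fintype k] [Fintype l]
    {M : Matrix k l ℝ} {X Y : Matrix l k ℝ}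
    (hX : IsMoorePenrose M X) (hY : IsMoorePenrose M Y) : X = Y := by
  obtain ⟨hX1, hX2, hX3, hX4⟩ := hX
  obtain ⟨hY1, hY2, hY3, hY4⟩ := hY
  have t1 : X * M = Y * M * (X * M) := by
    calc X * M = Mᵀ * Xᵀ := by rw [← hX4, transpose_mul]
    _ = (M * Y * M)ᵀ * Xᵀ := by rw [hY1]
    _ = (Y * M)ᵀ * (X * M)ᵀ := by simp only [transpose_mul, Matrix.mul_assoc]
    _ = Y * M * (X * M) := by rw [hY4, hX4]
  have t2 : M * Y = M * Y * (M * X) := by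
    calc M * Y = Yᵀ * Mᵀ := by rw [← hY3, transpose_mul]
    _ = Yᵀ * (M * X * M)ᵀ := by rw [hX1]
    _ = (M * Y)ᵀ * (M * X)ᵀ := by simp only [transpose_mul, Matrix.mul_assoc]
    _ = M * Y * (M * X) := by rw [hY3, hX3]
  have hX' : X = Y * M * X := by
    calc X = X * M * X := hX2.symm
    _ = Y * M * (X * M) * X := by rw [← t1]
    _ = Y * M * (X * M * X) := by simp only [Matrix.mul_assoc]
    _ = Y * M * X := by rw [hX2]
  have hY' : Y = Y * M * X := by
    calc Y = Y * M * Y := hY2.symm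
    _ = Y * (M * Y) := by rw [Matrix.mul_assoc]
    _ = Y * (M * Y * (M * X)) := by rw [← t2]
    _ = (Y * M * Y) * (M * X) := by simp only [Matrix.mul_assoc]
    _ = Y * (M * X) := by rw [hY2]
    _ = Y * M * X := by rw [Matrix.mul_assoc]
  exact hX'.trans hY'.symm

lemma mul_transpose_self_eq_zero' {k l : Type*} [Fintype k] [Fintype l]
    {M : Matrix k l ℝ} (h : M * Mᵀ = 0) : M = 0 := by
  rw [← conjTranspose_eq_transpose_of_trivial] at h
  exact self_mul_conjTranspose_eq_zero.mp h

set_option maxHeartbeats 1000000 in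
/-- error decrease. In the subspace-constrained sketch-and-project
setting, `‖B^{1/2}(x^{k+1} − x*)‖₂² = ‖B^{1/2}(x^k − x*)‖₂² − ‖Z B^{1/2}(x^k − x*)‖₂²`. -/
theorem stmt_3 {m n d l : ℕ}
    (A : Matrix (Fin m) (Fin n) ℝ) (b : Fin m → ℝ)
    (hconsistent : ∃ x, A *ᵥ x = b)
    (B : Matrix (Fin n) (Fin n) ℝ) (hB : B.PosDef)
    (Q : Matrix (Fin d) (Fin m) ℝ) (S : Matrix (Fin l) (Fin m) ℝ)
    -- `Bh = B^{1/2}` and `Bih = B^{-1/2}`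
    (Bh : Matrix (Fin n) (Fin n) ℝ) (hBh : Bh = hB.posSemidef.sqrt)
    (Bih : Matrix (Fin n) (Fin n) ℝ) (hBih : Bih = (hB.posSemidef.sqrt)⁻¹)
    -- `N1 = (Q A B^{-1/2})†` and `P = I - N1 (Q A B^{-1/2})`
    (N1 : Matrix (Fin n) (Fin d) ℝ) (hN1 : IsMoorePenrose (Q * A * Bih) N1)
    (P : Matrix (Fin n) (Fin n) ℝ) (hP : P = 1 - N1 * (Q * A * Bih))
    -- `N2 = (S A B^{-1/2} P B^{-1/2} Aᵀ Sᵀ)†` and the projector `Z`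
    (N2 : Matrix (Fin l) (Fin l) ℝ)
    (hN2 : IsMoorePenrose (S * A * Bih * P * Bih * Aᵀ * Sᵀ) N2)
    (Z : Matrix (Fin n) (Fin n) ℝ)
    (hZ : Z = P * Bih * Aᵀ * Sᵀ * N2 * (S * A * Bih * P))
    -- the initial iterate satisfies `Q A x0 = Q b`
    (x0 : Fin n → ℝ) (hx0 : (Q * A) *ᵥ x0 = Q *ᵥ b)
    -- `x*` is the minimizer of `‖x - x0‖_B` over `{x : Ax = b}`
    (xstar : Fin n → ℝ) (hxstar_sol : A *ᵥ xstar = b)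
    (hxstar_min : ∀ y : Fin n → ℝ, A *ᵥ y = b →
      (xstar - x0) ⬝ᵥ (B *ᵥ (xstar - x0)) ≤ (y - x0) ⬝ᵥ (B *ᵥ (y - x0)))
    -- the current iterate satisfies `Q A xk = Q b`
    (xk xk1 : Fin n → ℝ) (hxk : (Q * A) *ᵥ xk = Q *ᵥ b)
    -- `xk1` is the minimizer of `‖x - xk‖_B` subject to `SAx = Sb`, `QAx = Qb`
    (hxk1S : (S * A) *ᵥ xk1 = S *ᵥ b)
    (hxk1Q : (Q * A) *ᵥ xk1 = Q *ᵥ b)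
    (hxk1min : ∀ y : Fin n → ℝ, (S * A) *ᵥ y = S *ᵥ b → (Q * A) *ᵥ y = Q *ᵥ b →
      (xk1 - xk) ⬝ᵥ (B *ᵥ (xk1 - xk)) ≤ (y - xk) ⬝ᵥ (B *ᵥ (y - xk))) :
    (Bh *ᵥ (xk1 - xstar)) ⬝ᵥ (Bh *ᵥ (xk1 - xstar)) =
      (Bh *ᵥ (xk - xstar)) ⬝ᵥ (Bh *ᵥ (xk - xstar)) -
      (Z *ᵥ (Bh *ᵥ (xk - xstar))) ⬝ᵥ (Z *ᵥ (Bh *ᵥ (xk - xstar))) := by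
  obtain ⟨hN11, hN12, hN13, hN14⟩ := hN1
  obtain ⟨hN21, hN22, hN23, hN24⟩ := hN2
  -- basic facts about B, Bh, Bih
  have hBsym : Bᵀ = B := by
    rw [← conjTranspose_eq_transpose_of_trivial]; exact hB.1
  have hBhsym : Bhᵀ = Bh := by
    rw [hBh, ← conjTranspose_eq_transpose_of_trivial]
    exact sqrt_herm_real hB.posSemidef
  have hBhBh : Bh * Bh = B := by rw [hBh]; exact sqrt_mul_self_real hB.posSemidef
  have hdet : IsUnit Bh.det := by
    have h1 : Bh.det * Bh.det = B.det := by rw [← det_mul, hBhBh]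
    have h2 : B.det ≠ 0 := ne_of_gt hB.det_pos
    refine isUnit_iff_ne_zero.mpr fun h0 => h2 ?_
    rw [← h1, h0, mul_zero]
  have hBihdef : Bih = Bh⁻¹ := by rw [hBih, hBh]
  have hBihBh : Bih * Bh = 1 := by rw [hBihdef]; exact nonsing_inv_mul Bh hdet
  have hBhBih : Bh * Bih = 1 := by rw [hBihdef]; exact mul_nonsing_inv Bh hdet
  have hBihsym : Bihᵀ = Bih := by
    rw [hBihdef, transpose_nonsing_inv, hBhsym]
  -- abbreviations
  set M := Q * A * Bih with hMdef
  set W := S * A * Bih with hWdef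
  have hWt : Wᵀ = Bih * (Aᵀ * Sᵀ) := by
    rw [hWdef]
    simp only [transpose_mul, hBihsym, Matrix.mul_assoc]
  -- projector P
  have hPt : Pᵀ = P := by rw [hP, transpose_sub, transpose_one, hN14]
  have hPP : P * P = P := by
    have hE2 : (N1 * M) * (N1 * M) = N1 * M := by
      calc (N1 * M) * (N1 * M) = (N1 * M * N1) * M := by
            simp only [Matrix.mul_assoc]
      _ = N1 * M := by rw [hN12]
    rw [hP]
    have : (1 - N1 * M) * (1 - N1 * M)
        = 1 - N1 * M - N1 * M + (N1 * M) * (N1 * M) := by noncomm_ring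
    rw [this, hE2]; abel
  have hMP0 : M * P = 0 := by
    rw [hP, Matrix.mul_sub, Matrix.mul_one, ← Matrix.mul_assoc, hN11, sub_self]
  have hPfix : ∀ x : Fin n → ℝ, M *ᵥ x = 0 → P *ᵥ x = x := by
    intro x hx
    rw [hP, sub_mulVec, one_mulVec, ← Matrix.mulVec_mulVec, hx, mulVec_zero, sub_zero]
  -- rewrite the N2 Penrose conditions in terms of G = W * P * Wᵀ
  have key : S * A * Bih * P * Bih * Aᵀ * Sᵀ = W * P * Wᵀ := by
    rw [hWt, hWdef]; simp only [Matrix.mul_assoc]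
  rw [key] at hN21 hN22 hN23 hN24
  have hGt : (W * P * Wᵀ)ᵀ = W * P * Wᵀ := by
    simp only [transpose_mul, transpose_transpose, hPt, Matrix.mul_assoc]
  -- symmetry of N2
  have h34 : (W * P * Wᵀ) * N2ᵀ = N2 * (W * P * Wᵀ) := by
    calc (W * P * Wᵀ) * N2ᵀ = (W * P * Wᵀ)ᵀ * N2ᵀ := by rw [hGt]
    _ = (N2 * (W * P * Wᵀ))ᵀ := (transpose_mul _ _).symm
    _ = N2 * (W * P * Wᵀ) := hN24
  have h43 : N2ᵀ * (W * P * Wᵀ) = (W * P * Wᵀ) * N2 := by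
    calc N2ᵀ * (W * P * Wᵀ) = N2ᵀ * (W * P * Wᵀ)ᵀ := by rw [hGt]
    _ = ((W * P * Wᵀ) * N2)ᵀ := (transpose_mul _ _).symm
    _ = (W * P * Wᵀ) * N2 := hN23
  have hN2sym : N2ᵀ = N2 := by
    refine mp_unique (M := W * P * Wᵀ) ⟨?_, ?_, ?_, ?_⟩ ⟨hN21, hN22, hN23, hN24⟩
    · have h := congrArg Matrix.transpose hN21
      simp only [transpose_mul, transpose_transpose, hPt, Matrix.mul_assoc] at h ⊢
      exact h
    · have h := congrArg Matrix.transpose hN22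
      simp only [transpose_mul, transpose_transpose, hPt, Matrix.mul_assoc] at h ⊢
      exact h
    · rw [h34]; exact hN24
    · rw [h43]; exact hN23
  -- the key projection identity : (W*P*Wᵀ) * N2 * (W * P) = W * P
  have hCCt : (W * P) * (W * P)ᵀ = W * P * Wᵀ := by
    calc (W * P) * (W * P)ᵀ = W * (P * Pᵀ) * Wᵀ := by
          simp only [transpose_mul, Matrix.mul_assoc]
    _ = W * P * Wᵀ := by rw [hPt, hPP, Matrix.mul_assoc]
  have hFG : (1 - (W * P * Wᵀ) * N2) * (W * P * Wᵀ) = 0 := by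
    rw [Matrix.sub_mul, Matrix.one_mul, hN21, sub_self]
  have hFC : (1 - (W * P * Wᵀ) * N2) * (W * P) = 0 := by
    apply mul_transpose_self_eq_zero'
    calc ((1 - (W * P * Wᵀ) * N2) * (W * P)) * ((1 - (W * P * Wᵀ) * N2) * (W * P))ᵀ
        = (1 - (W * P * Wᵀ) * N2) * ((W * P) * (W * P)ᵀ) * (1 - (W * P * Wᵀ) * N2)ᵀ := by
          simp only [transpose_mul, Matrix.mul_assoc]
    _ = ((1 - (W * P * Wᵀ) * N2) * (W * P * Wᵀ)) * (1 - (W * P * Wᵀ) * N2)ᵀ := by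
          rw [hCCt, Matrix.mul_assoc]
    _ = 0 := by rw [hFG, Matrix.zero_mul]
  have hDC : (W * P * Wᵀ) * N2 * (W * P) = W * P := by
    have h := hFC
    rw [Matrix.sub_mul, Matrix.one_mul, sub_eq_zero] at h
    exact h.symm
  -- Z facts
  have hZ' : Z = P * Wᵀ * N2 * (W * P) := by
    rw [hZ, hWt]; simp only [Matrix.mul_assoc]
  have hWZ : W * Z = W * P := by
    calc W * Z = (W * P * Wᵀ) * N2 * (W * P) := by
          rw [hZ']; simp only [Matrix.mul_assoc]
    _ = W * P := hDC
  have hMZ : M * Z = 0 := by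
    calc M * Z = M * P * (Wᵀ * (N2 * (W * P))) := by
          rw [hZ']; simp only [Matrix.mul_assoc]
    _ = 0 := by rw [hMP0, Matrix.zero_mul]
  have hZt : Zᵀ = Z := by
    rw [hZ']
    simp only [transpose_mul, transpose_transpose, hPt, hN2sym, Matrix.mul_assoc]
  have hZZ : Z * Z = Z := by
    calc Z * Z = P * Wᵀ * (N2 * (W * (P * P) * Wᵀ) * N2) * (W * P) := by
          rw [hZ']; simp only [Matrix.mul_assoc]
    _ = P * Wᵀ * (N2 * (W * P * Wᵀ) * N2) * (W * P) := by
          rw [hPP, Matrix.mul_assoc W P Wᵀ]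
    _ = P * Wᵀ * N2 * (W * P) := by rw [hN22, Matrix.mul_assoc]
    _ = Z := hZ'.symm
  -- vector-level facts
  have hMBh : M * Bh = Q * A := by
    calc M * Bh = Q * A * (Bih * Bh) := by rw [hMdef]; simp only [Matrix.mul_assoc]
    _ = Q * A := by rw [hBihBh, Matrix.mul_one]
  have hWBh : W * Bh = S * A := by
    calc W * Bh = S * A * (Bih * Bh) := by rw [hWdef]; simp only [Matrix.mul_assoc]
    _ = S * A := by rw [hBihBh, Matrix.mul_one]
  have hQAxstar : (Q * A) *ᵥ xstar = Q *ᵥ b := by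
    rw [← Matrix.mulVec_mulVec, hxstar_sol]
  have hSAxstar : (S * A) *ᵥ xstar = S *ᵥ b := by
    rw [← Matrix.mulVec_mulVec, hxstar_sol]
  set u := Bh *ᵥ (xk - xstar) with hudef
  set v := Bh *ᵥ (xk1 - xk) with hvdef
  have hMu : M *ᵥ u = 0 := by
    rw [hudef, Matrix.mulVec_mulVec, hMBh, Matrix.mulVec_sub, hxk, hQAxstar, sub_self]
  have hMv : M *ᵥ v = 0 := by
    rw [hvdef, Matrix.mulVec_mulVec, hMBh, Matrix.mulVec_sub, hxk1Q, hxk, sub_self]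
  have hWuv : W *ᵥ u + W *ᵥ v = 0 := by
    rw [hudef, hvdef, Matrix.mulVec_mulVec, Matrix.mulVec_mulVec, hWBh,
      ← Matrix.mulVec_add, show xk - xstar + (xk1 - xk) = xk1 - xstar by abel,
      Matrix.mulVec_sub, hxk1S, hSAxstar, sub_self]
  -- symmetry of the bilinear form
  have hsymm : ∀ a c : Fin n → ℝ, a ⬝ᵥ (B *ᵥ c) = c ⬝ᵥ (B *ᵥ a) := by
    intro a c
    rw [dotProduct_mulVec, ← Matrix.mulVec_transpose, hBsym, dotProduct_comm]
  -- the orthogonality property coming from minimality of xk1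
  have horth : ∀ g : Fin n → ℝ, W *ᵥ g = 0 → M *ᵥ g = 0 → g ⬝ᵥ v = 0 := by
    intro g hWg hMg
    set h := Bih *ᵥ g with hh
    have hBhh : Bh *ᵥ h = g := by
      rw [hh, Matrix.mulVec_mulVec, hBhBih, Matrix.one_mulVec]
    have hSAh : (S * A) *ᵥ h = 0 := by
      rw [hh, Matrix.mulVec_mulVec, show S * A * Bih = W from hWdef.symm, hWg]
    have hQAh : (Q * A) *ᵥ h = 0 := by
      rw [hh, Matrix.mulVec_mulVec, show Q * A * Bih = M from hMdef.symm, hMg]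
    set c := h ⬝ᵥ (B *ᵥ (xk1 - xk)) with hc
    set q := h ⬝ᵥ (B *ᵥ h) with hq
    have hq0 : 0 ≤ q := by
      have := hB.posSemidef.dotProduct_mulVec_nonneg h
      simpa using this
    have hineq : ∀ t : ℝ, 0 ≤ 2 * t * c + t ^ 2 * q := by
      intro t
      have hyS : (S * A) *ᵥ (xk1 + t • h) = S *ᵥ b := by
        rw [Matrix.mulVec_add, Matrix.mulVec_smul, hSAh, smul_zero, add_zero, hxk1S]
      have hyQ : (Q * A) *ᵥ (xk1 + t • h) = Q *ᵥ b := by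
        rw [Matrix.mulVec_add, Matrix.mulVec_smul, hQAh, smul_zero, add_zero, hxk1Q]
      have hmin := hxk1min _ hyS hyQ
      have hexp : (xk1 + t • h - xk) ⬝ᵥ (B *ᵥ (xk1 + t • h - xk))
          = (xk1 - xk) ⬝ᵥ (B *ᵥ (xk1 - xk)) + 2 * t * c + t ^ 2 * q := by
        rw [show xk1 + t • h - xk = (xk1 - xk) + t • h from add_sub_right_comm _ _ _]
        rw [hc, hq]
        rw [Matrix.mulVec_add, Matrix.mulVec_smul]
        simp only [dotProduct_add, add_dotProduct, dotProduct_smul, smul_dotProduct,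
          smul_eq_mul]
        rw [hsymm (xk1 - xk) h]
        ring
      rw [hexp] at hmin
      linarith
    have hc0 : c = 0 := by
      have hq1 : (0:ℝ) < q + 1 := by linarith
      have h1 := hineq (-(c / (q + 1)))
      have h2 : 0 ≤ (2 * (-(c / (q + 1))) * c + (-(c / (q + 1))) ^ 2 * q) * (q + 1) ^ 2 :=
        mul_nonneg h1 (sq_nonneg _)
      have h3 : (2 * (-(c / (q + 1))) * c + (-(c / (q + 1))) ^ 2 * q) * (q + 1) ^ 2
          = -(c ^ 2 * q) - 2 * c ^ 2 := by
        field_simp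
        ring
      rw [h3] at h2
      have h4 : c ^ 2 ≤ 0 := by
        have h5 : 0 ≤ c ^ 2 * q := mul_nonneg (sq_nonneg c) hq0
        linarith
      have hc2 : c ^ 2 = 0 := le_antisymm h4 (sq_nonneg c)
      exact (pow_eq_zero_iff (two_ne_zero)).mp hc2
    have hdot : ∀ a x : Fin n → ℝ, a ⬝ᵥ (Bh *ᵥ x) = (Bh *ᵥ a) ⬝ᵥ x := by
      intro a x
      rw [dotProduct_mulVec, ← Matrix.mulVec_transpose, hBhsym]
    calc g ⬝ᵥ v = g ⬝ᵥ (Bh *ᵥ (xk1 - xk)) := by rw [hvdef]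
    _ = (Bh *ᵥ g) ⬝ᵥ (xk1 - xk) := hdot _ _
    _ = (Bh *ᵥ (Bh *ᵥ h)) ⬝ᵥ (xk1 - xk) := by rw [hBhh]
    _ = h ⬝ᵥ (B *ᵥ (xk1 - xk)) := by
        rw [← hdot, ← hdot, Matrix.mulVec_mulVec, hBhBh]
    _ = c := hc.symm
    _ = 0 := hc0
  -- the update identity : v = -(Z *ᵥ u)
  have hPu : P *ᵥ u = u := hPfix u hMu
  set w := v + Z *ᵥ u with hwdef
  have hWZu : W *ᵥ (Z *ᵥ u) = W *ᵥ u := by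
    rw [Matrix.mulVec_mulVec, hWZ, ← Matrix.mulVec_mulVec, hPu]
  have hWw : W *ᵥ w = 0 := by
    rw [hwdef, Matrix.mulVec_add, hWZu, add_comm]
    exact hWuv
  have hMw : M *ᵥ w = 0 := by
    rw [hwdef, Matrix.mulVec_add, hMv, Matrix.mulVec_mulVec, hMZ, Matrix.zero_mulVec,
      add_zero]
  have hZw : Z *ᵥ w = 0 := by
    have h1 : (W * P) *ᵥ w = 0 := by
      rw [← Matrix.mulVec_mulVec, hPfix w hMw, hWw]
    rw [hZ', ← Matrix.mulVec_mulVec, h1, Matrix.mulVec_zero]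
  have hwv : w ⬝ᵥ v = 0 := horth w hWw hMw
  have hwZu : w ⬝ᵥ (Z *ᵥ u) = 0 := by
    rw [dotProduct_mulVec, ← Matrix.mulVec_transpose, hZt, hZw, zero_dotProduct]
  have hww : w ⬝ᵥ w = 0 := by
    nth_rewrite 2 [hwdef]
    rw [dotProduct_add, hwv, hwZu, add_zero]
  have hw0 : w = 0 := dotProduct_self_eq_zero.mp hww
  have hveq : v = -(Z *ᵥ u) := by
    have : v + Z *ᵥ u = 0 := hwdef ▸ hw0
    linear_combination (norm := module) this
  -- conclusion
  have huv : Bh *ᵥ (xk1 - xstar) = u - Z *ᵥ u := by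
    have h1 : Bh *ᵥ (xk1 - xstar) = u + v := by
      rw [hudef, hvdef, ← Matrix.mulVec_add,
        show xk - xstar + (xk1 - xk) = xk1 - xstar by abel]
    rw [h1, hveq, ← sub_eq_add_neg]
  rw [huv]
  have hZuZu : (Z *ᵥ u) ⬝ᵥ (Z *ᵥ u) = (Z *ᵥ u) ⬝ᵥ u := by
    rw [dotProduct_mulVec, ← Matrix.mulVec_transpose, hZt, Matrix.mulVec_mulVec, hZZ]
  have huZu : u ⬝ᵥ (Z *ᵥ u) = (Z *ᵥ u) ⬝ᵥ u := dotProduct_comm _ _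
  simp only [dotProduct_sub, sub_dotProduct]
  linarith [hZuZu, huZu]
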